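/- Let A be an r × n integer matrix all of whose r × r minors lie in {0, 1, −1} (A is unimodular) and suppose A has rank r. Then for every b ∈ ℤ^r, every vertex of the polyhedron P(A,b) = {α ∈ ℝ^n_{≥0} : Aα = b} has integer coordinates. -/

import Mathlib

open Matrix Set Module Submodule Function

/-- If `A` is a unimodular integer matrix (all `r × r` minors in `{0, 1, -1}`) of rank
`r`, then for every integral `b`, every vertex (extreme point) of the polyhedron
`P(A,b) = {α ≥ 0 : Aα = b}` has integer coordinates. -/
theorem stmt6 (r n : ℕ) (A : Matrix (Fin r) (Fin n) ℤ)
    (hminor : ∀ f : Fin r → Fin n,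
      (A.submatrix id f).det = 0 ∨ (A.submatrix id f).det = 1 ∨ (A.submatrix id f).det = -1)
    (hrank : (A.map (Int.cast : ℤ → ℚ)).rank = r)
    (b : Fin r → ℤ) :
    ∀ x ∈ Set.extremePoints ℝ
        {α : Fin n → ℝ | (∀ i, 0 ≤ α i) ∧
          (A.map (Int.cast : ℤ → ℝ)).mulVec α = fun i => (b i : ℝ)},
      ∀ i, ∃ z : ℤ, x i = (z : ℝ) := by
  classical
  intro x hx
  obtain ⟨⟨hxpos, hxeq⟩, hext⟩ := hx
  set RA : Matrix (Fin r) (Fin n) ℝ := A.map (Int.cast : ℤ → ℝ) with hRA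
  set col : Fin n → (Fin r → ℝ) := fun j => RAᵀ j with hcol
  -- Step 1: the columns on the support of x are linearly independent
  have hindep : LinearIndependent ℝ (fun j : {j : Fin n | x j ≠ 0} => col (j : Fin n)) := by
    by_contra hdep
    obtain ⟨g, hsum, j0, hj0⟩ := Fintype.not_linearIndependent_iff.mp hdep
    set c : Fin n → ℝ := fun k => if h : x k ≠ 0 then g ⟨k, h⟩ else 0 with hc
    have hcx : ∀ k, x k = 0 → c k = 0 := by intro k hk; simp [hc, hk]
    have hcj0 : c (j0 : Fin n) = g j0 := by
      simp only [hc]; exact dif_pos j0.2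
    have hcne : c ≠ 0 := by
      intro h
      exact hj0 (by rw [← hcj0, h]; rfl)
    have hAc : RA.mulVec c = 0 := by
      funext i
      have h1 : RA.mulVec c i = ∑ k : Fin n, RA i k * c k := rfl
      have h2 : ∑ k : Fin n, RA i k * c k
          = ∑ k ∈ Finset.univ.filter (fun k => x k ≠ 0), RA i k * c k := by
        refine (Finset.sum_subset (Finset.filter_subset _ _) ?_).symm
        intro k _ hk
        simp only [Finset.mem_filter, Finset.mem_univ, true_and, not_not] at hk
        rw [hcx k hk, mul_zero]
      have h3 : ∑ k ∈ Finset.univ.filter (fun k => x k ≠ 0), RA i k * c k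
          = ∑ j : {j : Fin n | x j ≠ 0}, g j * col (j : Fin n) i := by
        rw [Finset.sum_subtype (Finset.univ.filter (fun k => x k ≠ 0))
          (p := fun k => x k ≠ 0) (by simp) (fun k => RA i k * c k)]
        refine Finset.sum_congr rfl fun j _ => ?_
        have hcj : c (j : Fin n) = g j := by simp only [hc]; exact dif_pos j.2
        rw [hcj, mul_comm]
        rfl
      have h4 := congrFun hsum i
      rw [h1, h2, h3]
      simpa [Finset.sum_apply] using h4
    -- choose epsilon
    set h : Fin n → ℝ := fun k => if x k = 0 then 1 else x k / (|c k| + 1) with hh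
    have hne : (Finset.univ : Finset (Fin n)).Nonempty := ⟨j0, Finset.mem_univ _⟩
    set ε : ℝ := Finset.univ.inf' hne h with hε
    have hεpos : 0 < ε := by
      rw [hε, Finset.lt_inf'_iff]
      intro k _
      by_cases hk : x k = 0
      · simp [hh, hk]
      · have : 0 < x k := lt_of_le_of_ne (hxpos k) (Ne.symm hk)
        simp only [hh, hk, if_false]
        positivity
    have hεle : ∀ k, x k ≠ 0 → ε * (|c k| + 1) ≤ x k := by
      intro k hk
      have h1 : ε ≤ x k / (|c k| + 1) := by
        have h0 := Finset.inf'_le h (Finset.mem_univ k)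
        simp only [hh, if_neg hk] at h0
        exact h0
      have h2 : (0:ℝ) < |c k| + 1 := by positivity
      calc ε * (|c k| + 1) ≤ (x k / (|c k| + 1)) * (|c k| + 1) := by
            exact mul_le_mul_of_nonneg_right h1 (le_of_lt h2)
        _ = x k := div_mul_cancel₀ _ (ne_of_gt h2)
    have hbound : ∀ i, 0 ≤ x i - ε * c i ∧ 0 ≤ x i + ε * c i := by
      intro i
      by_cases hi : x i = 0
      · rw [hcx i hi, hi]; norm_num
      · have h1 := hεle i hi
        have h2 := le_abs_self (c i)
        have h3 := neg_abs_le (c i)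
        have h4 := abs_nonneg (c i)
        constructor <;> nlinarith
    have hmem : ∀ (s : ℝ), (fun k => x k + s * ε * c k) ∈
        {α : Fin n → ℝ | (∀ i, 0 ≤ α i) ∧ RA.mulVec α = fun i => (b i : ℝ)} → True := fun _ _ => trivial
    have hmemgen : ∀ s : ℝ, RA.mulVec (x + (s * ε) • c) = fun i => (b i : ℝ) := by
      intro s
      rw [mulVec_add, mulVec_smul, hAc, smul_zero, add_zero, hxeq]
    have hmem1 : (x + (-ε) • c) ∈
        {α : Fin n → ℝ | (∀ i, 0 ≤ α i) ∧ RA.mulVec α = fun i => (b i : ℝ)} := by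
      constructor
      · intro i
        have := (hbound i).1
        simpa [sub_eq_add_neg, neg_smul, neg_mul] using this
      · have := hmemgen (-1)
        simpa using this
    have hmem2 : (x + ε • c) ∈
        {α : Fin n → ℝ | (∀ i, 0 ≤ α i) ∧ RA.mulVec α = fun i => (b i : ℝ)} := by
      constructor
      · intro i
        exact (hbound i).2
      · have := hmemgen 1
        simpa using this
    have hop : x ∈ openSegment ℝ (x + (-ε) • c) (x + ε • c) := by
      refine ⟨1/2, 1/2, by norm_num, by norm_num, by norm_num, ?_⟩
      funext k
      simp only [Pi.add_apply, Pi.smul_apply, smul_eq_mul, neg_smul, Pi.neg_apply]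
      ring
    have := hext hmem1 hmem2 hop
    have hc0 : (-ε) • c = 0 := by
      have := congrArg (fun v => v - x) this
      simpa [add_sub_cancel_left] using this
    have : c = 0 := by
      exact (smul_eq_zero.mp hc0).resolve_left (neg_ne_zero.mpr (ne_of_gt hεpos))
    exact hcne this
    -- Step 2: surjectivity over ℝ
  have hsurjQ : Function.Surjective (A.map (Int.cast : ℤ → ℚ)).mulVecLin := by
    rw [← LinearMap.range_eq_top]
    apply Submodule.eq_top_of_finrank_eq
    rw [Module.finrank_fin_fun]
    exact hrank
  have hAm : (A.map (Int.cast : ℤ → ℚ)).map (Rat.cast : ℚ → ℝ) = RA := by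
    rw [Matrix.map_map]
    ext i k
    simp [hRA]
  have hsurjR : Function.Surjective RA.mulVecLin := by
    intro u
    choose cc hcc using fun i => hsurjQ (Pi.single i (1:ℚ))
    refine ⟨fun k => ∑ i, u i * ((cc i k : ℚ) : ℝ), ?_⟩
    simp only [mulVecLin_apply] at hcc ⊢
    funext j
    have key : ∀ i, RA.mulVec (fun k => ((cc i k : ℚ) : ℝ)) j
        = (((Pi.single i (1:ℚ) : Fin r → ℚ) j : ℚ) : ℝ) := by
      intro i
      have h1 := RingHom.map_mulVec (Rat.castHom ℝ) (A.map (Int.cast : ℤ → ℚ)) (cc i) j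
      rw [hcc i] at h1
      rw [show ((A.map (Int.cast : ℤ → ℚ)).map (⇑(Rat.castHom ℝ)) : Matrix (Fin r) (Fin n) ℝ)
        = RA from hAm] at h1
      exact h1.symm
    have lhs : RA.mulVec (fun k => ∑ i, u i * ((cc i k : ℚ) : ℝ)) j
        = ∑ i, u i * RA.mulVec (fun k => ((cc i k : ℚ) : ℝ)) j := by
      simp only [Matrix.mulVec, dotProduct, Finset.mul_sum]
      rw [Finset.sum_comm]
      refine Finset.sum_congr rfl fun i _ => ?_
      refine Finset.sum_congr rfl fun k _ => ?_
      ring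
    rw [lhs]
    simp only [key, Pi.single_apply]
    rw [Finset.sum_eq_single j]
    · simp
    · intro i _ hij
      simp [Ne.symm hij]
    · intro hj
      exact absurd (Finset.mem_univ j) hj
  have hspan : Submodule.span ℝ (Set.range RAᵀ) = ⊤ := by
    rw [show Set.range RAᵀ = Set.range RA.col from rfl, ← Matrix.range_mulVecLin]
    exact LinearMap.range_eq_top.mpr hsurjR
  -- Step 3: extend the support columns to a basis of ℝ^r made of columns
  set s : Set (Fin r → ℝ) := col '' {j | x j ≠ 0} with hs_def
  have hs : LinearIndependent ℝ ((↑) : s → (Fin r → ℝ)) := (show LinearIndepOn ℝ col {j | x j ≠ 0} from hindep).id_image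
  have hst : s ⊆ Set.range col := by
    rintro w ⟨j, -, rfl⟩; exact ⟨j, rfl⟩
  set bset := LinearIndepOn.extend (show LinearIndepOn ℝ id s from hs) hst with hbset
  have hb_indep : LinearIndependent ℝ ((↑) : bset → (Fin r → ℝ)) :=
    LinearIndepOn.linearIndepOn_extend (show LinearIndepOn ℝ id s from hs) hst
  have hb_sub : s ⊆ bset := LinearIndepOn.subset_extend (show LinearIndepOn ℝ id s from hs) hst
  have hb_range : bset ⊆ Set.range col := LinearIndepOn.extend_subset (show LinearIndepOn ℝ id s from hs) hst
  have hb_span : Submodule.span ℝ bset = ⊤ := by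
    rw [hbset, LinearIndepOn.span_extend_eq_span (show LinearIndepOn ℝ id s from hs) hst]
    exact hspan
  have hfin : bset.Finite := hb_indep.setFinite
  letI := hfin.fintype
  have hcard : bset.toFinset.card = r := by
    have h1 : finrank ℝ (Submodule.span ℝ bset) = bset.toFinset.card :=
      finrank_span_set_eq_card hb_indep
    rw [hb_span, finrank_top, Module.finrank_fin_fun] at h1
    exact h1.symm
  have hinjOn : Set.InjOn col {j | x j ≠ 0} := by
    intro a ha a' ha' hab
    have : (⟨a, ha⟩ : {j : Fin n | x j ≠ 0}) = ⟨a', ha'⟩ := hindep.injective hab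
    exact congrArg Subtype.val this
  have hchoice : ∀ w ∈ bset, ∃ j : Fin n, col j = w ∧ (w ∈ s → x j ≠ 0) := by
    intro w hw
    by_cases hws : w ∈ s
    · obtain ⟨j, hj, rfl⟩ := hws
      exact ⟨j, rfl, fun _ => hj⟩
    · obtain ⟨j, rfl⟩ := hb_range hw
      exact ⟨j, rfl, fun h => absurd h hws⟩
  choose g hg1 hg2 using hchoice
  set e : {w // w ∈ bset.toFinset} ≃ Fin r := Finset.equivFinOfCardEq hcard with he
  set F : {w // w ∈ bset.toFinset} → Fin n :=
    fun w => g w.1 (Set.mem_toFinset.mp w.2) with hF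
  set f : Fin r → Fin n := fun i => F (e.symm i) with hf
  have hcolF : ∀ w, col (F w) = w.1 := fun w => hg1 _ _
  have hFinj : Function.Injective F := by
    intro w1 w2 h12
    apply Subtype.ext
    rw [← hcolF w1, ← hcolF w2, h12]
  have hfinj : Function.Injective f := hFinj.comp e.symm.injective
  have hcolf : ∀ i, col (f i) = (e.symm i).1 := fun i => hcolF _
  have hsuppf : ∀ k, x k ≠ 0 → ∃ i, f i = k := by
    intro k hk
    have hks : col k ∈ s := ⟨k, hk, rfl⟩
    have hkb : col k ∈ bset := hb_sub hks
    have hmem' : col k ∈ bset.toFinset := Set.mem_toFinset.mpr hkb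
    refine ⟨e ⟨col k, hmem'⟩, ?_⟩
    have h2 : F (e.symm (e ⟨col k, hmem'⟩)) = F ⟨col k, hmem'⟩ :=
      congrArg F (e.symm_apply_apply _)
    show F (e.symm (e ⟨col k, hmem'⟩)) = k
    rw [h2]
    exact hinjOn (hg2 (col k) hkb hks) hk (hg1 (col k) hkb)
  have hBindep : LinearIndependent ℝ (fun i : Fin r => col (f i)) := by
    have φinj : Function.Injective
        (fun i : Fin r => (⟨(e.symm i).1, Set.mem_toFinset.mp (e.symm i).2⟩ : bset)) := by
      intro i1 i2 h12
      have h13 := congrArg (Subtype.val : {w // w ∈ bset} → (Fin r → ℝ)) h12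
      simp only at h13
      exact e.symm.injective (Subtype.ext h13)
    have := hb_indep.comp _ φinj
    convert this using 1
    funext i
    exact hcolf i
  -- Step 4: the r×r submatrix is unimodular; solve the system over ℤ
  set B : Matrix (Fin r) (Fin r) ℤ := A.submatrix id f with hB
  set BR : Matrix (Fin r) (Fin r) ℝ := RA.submatrix id f with hBRdef
  have hBRmap : B.map (Int.cast : ℤ → ℝ) = BR := rfl
  have hBRcols : (fun i => BRᵀ i) = fun i => col (f i) := rfl
  have hBRunit : IsUnit BR := by
    rw [← Matrix.linearIndependent_cols_iff_isUnit]
    exact hBindep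
  have hdetB : ((B.det : ℤ) : ℝ) = BR.det := by
    rw [← hBRmap]
    exact RingHom.map_det (Int.castRingHom ℝ) B
  have hdetBne : B.det ≠ 0 := by
    intro h0
    have : BR.det = 0 := by rw [← hdetB, h0]; simp
    exact (by simpa [this] using (Matrix.isUnit_iff_isUnit_det BR).mp hBRunit : False)
  have hdetBunit : IsUnit B.det := by
    rcases hminor f with h | h | h
    · exact absurd h hdetBne
    · rw [hB, h]; exact isUnit_one
    · rw [hB, h]; exact isUnit_one.neg
  set y : Fin r → ℤ := B⁻¹.mulVec b with hy
  have hBy : B.mulVec y = b := by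
    rw [hy, Matrix.mulVec_mulVec, Matrix.mul_nonsing_inv _ hdetBunit, Matrix.one_mulVec]
  have hsolve : BR.mulVec (fun j => x (f j)) = fun i => (b i : ℝ) := by
    funext i
    have hsum1 : BR.mulVec (fun j => x (f j)) i = ∑ j : Fin r, RA i (f j) * x (f j) := rfl
    have himg : ∑ k ∈ Finset.univ.image f, RA i k * x k
        = ∑ j : Fin r, RA i (f j) * x (f j) :=
      Finset.sum_image (fun a _ a' _ hab => hfinj hab)
    have hfull : ∑ k ∈ Finset.univ.image f, RA i k * x k = ∑ k : Fin n, RA i k * x k := by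
      apply Finset.sum_subset (Finset.subset_univ _)
      intro k _ hk
      have hxk : x k = 0 := by
        by_contra hxk
        obtain ⟨j, hj⟩ := hsuppf k hxk
        exact hk (Finset.mem_image.mpr ⟨j, Finset.mem_univ _, hj⟩)
      rw [hxk, mul_zero]
    rw [hsum1, ← himg, hfull]
    exact congrFun hxeq i
  have hcastsolve : BR.mulVec (fun j => ((y j : ℤ) : ℝ)) = fun i => (b i : ℝ) := by
    funext i
    have h1 := RingHom.map_mulVec (Int.castRingHom ℝ) B y i
    rw [hBy] at h1
    exact h1.symm
  have hxf : (fun j => x (f j)) = fun j => ((y j : ℤ) : ℝ) :=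
    Matrix.mulVec_injective_iff_isUnit.mpr hBRunit (hsolve.trans hcastsolve.symm)
  intro i
  by_cases hxi : x i = 0
  · exact ⟨0, by simp [hxi]⟩
  · obtain ⟨j, hj⟩ := hsuppf i hxi
    exact ⟨y j, by rw [← hj]; exact congrFun hxf j⟩
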